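/- Let G be a graph, T a tree, f : G → T a graph homomorphism, n ≥ 1 an integer, and η a multi-homomorphism from G to T such that d_T(f(z), y) ≤ 2n for every z ∈ V(G) and every y ∈ η(z). Let (x,x′) ∈ E(G) be an edge with u_η(x) = u_η(x′) = 2n. Then exactly one of the following two conditions holds: (1) η(x) is a singleton {y}, and for every y′ ∈ η(x′) with d_T(f(x′), y′) = 2n the unique path in T from f(x′) to y′ contains y; (2) η(x′) is a singleton {y′}, and for every y ∈ η(x) with d_T(f(x), y) = 2n the unique path in T from f(x) to y contains y′. -/

import Mathlib

structure Graph' where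
  V : Type
  E : V → V → Prop
  symm : ∀ {x y}, E x y → E y x

def IsGraphHom (G H : Graph') (f : G.V → H.V) : Prop :=
  ∀ {x y}, G.E x y → H.E (f x) (f y)

structure Walk (G : Graph') (a b : G.V) where
  len : ℕ
  toFun : ℕ → G.V
  start_eq : toFun 0 = a
  end_eq : toFun len = b
  adj : ∀ i, i < len → G.E (toFun i) (toFun (i + 1))

structure MultiHom (G H : Graph') where
  toFun : G.V → Set H.V
  nonempty : ∀ x, (toFun x).Nonempty
  edge : ∀ {x y}, G.E x y → ∀ a ∈ toFun x, ∀ b ∈ toFun y, H.E a b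

def MultiHom.le {G H : Graph'} (η η' : MultiHom G H) : Prop :=
  ∀ x, η.toFun x ⊆ η'.toFun x

def SameComponent {G H : Graph'} (η η' : MultiHom G H) : Prop :=
  Relation.ReflTransGen (fun a b => MultiHom.le a b ∨ MultiHom.le b a) η η'

def ofHom {G H : Graph'} (f : G.V → H.V) (hf : IsGraphHom G H f) : MultiHom G H where
  toFun x := {f x}
  nonempty x := ⟨f x, rfl⟩
  edge := by
    intro x y hxy a ha b hb
    rw [Set.mem_singleton_iff] at ha hb
    subst ha; subst hb
    exact hf hxy

def prodI (G : Graph') (n : ℕ) : Graph' where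
  V := G.V × Fin (n + 1)
  E := fun p q => G.E p.1 q.1 ∧ p.2.val ≤ q.2.val + 1 ∧ q.2.val ≤ p.2.val + 1
  symm := by
    rintro p q ⟨h1, h2, h3⟩
    exact ⟨G.symm h1, h3, h2⟩

def MoveA {G : Graph'} {a b : G.V} (γ δ : Walk G a b) : Prop :=
  δ.len = γ.len + 2 ∧ ∃ k ≤ γ.len,
    (∀ i ≤ k, δ.toFun i = γ.toFun i) ∧
    (∀ i, k ≤ i → i ≤ γ.len → δ.toFun (i + 2) = γ.toFun i)

def MoveB {G : Graph'} {a b : G.V} (γ δ : Walk G a b) : Prop :=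
  γ.len = δ.len ∧ ∃ j, ∀ i ≤ γ.len, i ≠ j → γ.toFun i = δ.toFun i

def Eqv1 {G : Graph'} {a b : G.V} : Walk G a b → Walk G a b → Prop :=
  Relation.EqvGen MoveA

def Eqv2 {G : Graph'} {a b : G.V} : Walk G a b → Walk G a b → Prop :=
  Relation.EqvGen (fun γ δ => MoveA γ δ ∨ MoveB γ δ)

noncomputable def Graph'.dist (G : Graph') (a b : G.V) : ℕ :=
  sInf {n | ∃ γ : Walk G a b, γ.len = n}

def Graph'.Connected (G : Graph') : Prop := ∀ a b : G.V, Nonempty (Walk G a b)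

def Graph'.Bipartite (G : Graph') : Prop :=
  ∃ c : G.V → ZMod 2, ∀ {x y}, G.E x y → c x ≠ c y

def constWalk {G : Graph'} (a : G.V) : Walk G a a :=
  ⟨0, fun _ => a, rfl, rfl, fun i hi => absurd hi (by omega)⟩

def Walk.concat {G : Graph'} {a b c : G.V} (γ : Walk G a b) (δ : Walk G b c) :
    Walk G a c where
  len := γ.len + δ.len
  toFun i := if i ≤ γ.len then γ.toFun i else δ.toFun (i - γ.len)
  start_eq := by simp [γ.start_eq]
  end_eq := by
    by_cases h : δ.len = 0
    · have hbc : b = c := by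
        have h1 := δ.end_eq
        rw [h, δ.start_eq] at h1
        exact h1
      simp [h, γ.end_eq, hbc]
    · have h1 : ¬ (γ.len + δ.len ≤ γ.len) := by omega
      (try dsimp only)
      rw [if_neg h1]
      have h2 : γ.len + δ.len - γ.len = δ.len := by omega
      rw [h2, δ.end_eq]
  adj := by
    intro i hi
    (try dsimp only)
    rcases lt_trichotomy i γ.len with h | h | h
    · rw [if_pos (by omega : i ≤ γ.len), if_pos (by omega : i + 1 ≤ γ.len)]
      exact γ.adj i h
    · have hδ : 0 < δ.len := by omega
      rw [if_pos (by omega : i ≤ γ.len), if_neg (by omega : ¬ i + 1 ≤ γ.len)]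
      have h2 : i + 1 - γ.len = 1 := by omega
      rw [h2, h, γ.end_eq]
      have h3 := δ.adj 0 hδ
      rw [δ.start_eq] at h3
      exact h3
    · rw [if_neg (by omega : ¬ i ≤ γ.len), if_neg (by omega : ¬ i + 1 ≤ γ.len)]
      have h2 : i + 1 - γ.len = (i - γ.len) + 1 := by omega
      rw [h2]
      exact δ.adj (i - γ.len) (by omega)

def Walk.reverse {G : Graph'} {a b : G.V} (γ : Walk G a b) : Walk G b a where
  len := γ.len
  toFun i := γ.toFun (γ.len - i)
  start_eq := by simp [γ.end_eq]
  end_eq := by simp [γ.start_eq]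
  adj := by
    intro i hi
    have h1 : γ.len - i = (γ.len - (i + 1)) + 1 := by omega
    have h2 := γ.adj (γ.len - (i + 1)) (by omega)
    rw [← h1] at h2
    exact G.symm h2

def Walk.map {G H : Graph'} (f : G.V → H.V) (hf : IsGraphHom G H f) {a b : G.V}
    (γ : Walk G a b) : Walk H (f a) (f b) where
  len := γ.len
  toFun i := f (γ.toFun i)
  start_eq := by (try dsimp only); rw [γ.start_eq]
  end_eq := by (try dsimp only); rw [γ.end_eq]
  adj := fun i hi => hf (γ.adj i hi)

def Walk.pow {G : Graph'} {a : G.V} (γ : Walk G a a) : ℕ → Walk G a a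
  | 0 => constWalk a
  | n + 1 => (Walk.pow γ n).concat γ

def Walk.zpow {G : Graph'} {a : G.V} (γ : Walk G a a) : ℤ → Walk G a a
  | Int.ofNat n => γ.pow n
  | Int.negSucc n => γ.reverse.pow (n + 1)
def finClip (n t : ℕ) : Fin (n + 1) := ⟨min t n, by omega⟩

def realizedWalk {G H : Graph'} {n : ℕ} (h : (prodI G n).V → H.V)
    (hh : IsGraphHom (prodI G n) H h) {v v' : G.V} (hvv' : G.E v v')
    {w : H.V} (h0 : h (v, finClip n 0) = w) (hN : h (v, finClip n n) = w) :
    Walk H w w where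
  len := 2 * n
  toFun i := if i % 2 = 0 then h (v, finClip n (i / 2)) else h (v', finClip n (i / 2))
  start_eq := by
    (try dsimp only)
    rw [if_pos (by norm_num : (0:ℕ) % 2 = 0), Nat.zero_div]
    exact h0
  end_eq := by
    (try dsimp only)
    rw [if_pos (by omega : (2 * n) % 2 = 0)]
    have h2 : 2 * n / 2 = n := by omega
    rw [h2]
    exact hN
  adj := by
    intro i hi
    (try dsimp only)
    rcases Nat.even_or_odd i with he | ho
    · obtain ⟨t, ht⟩ := he
      rw [if_pos (by omega : i % 2 = 0), if_neg (by omega : ¬ (i + 1) % 2 = 0)]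
      have h4 : (i + 1) / 2 = i / 2 := by omega
      rw [h4]
      refine hh ⟨hvv', ?_, ?_⟩ <;> ((try dsimp only); omega)
    · obtain ⟨t, ht⟩ := ho
      rw [if_neg (by omega : ¬ i % 2 = 0), if_pos (by omega : (i + 1) % 2 = 0)]
      refine hh ⟨G.symm hvv', ?_, ?_⟩ <;> (dsimp only [finClip]; omega)

def Realizable {G H : Graph'} (f : G.V → H.V) (v : G.V) (ω : Walk H (f v) (f v)) : Prop :=
  ∃ (n : ℕ) (h : (prodI G n).V → H.V) (hh : IsGraphHom (prodI G n) H h)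
    (hs : ∀ x, h (x, finClip n 0) = f x) (he : ∀ x, h (x, finClip n n) = f x)
    (v' : G.V) (_ : G.E v v'),
    Eqv2 ω (realizedWalk h hh ‹G.E v v'› (hs v) (he v))
def SquareFree (G : Graph') : Prop :=
  (∀ x, ¬ G.E x x) ∧
  ¬ ∃ a b c d : G.V, a ≠ b ∧ a ≠ c ∧ a ≠ d ∧ b ≠ c ∧ b ≠ d ∧ c ≠ d ∧
    G.E a b ∧ G.E b c ∧ G.E c d ∧ G.E d a

def nbhd (G : Graph') (v : G.V) : Set G.V := {y | G.E v y}

def nbhd2 (G : Graph') (v : G.V) : Set G.V := {z | ∃ y, G.E v y ∧ G.E y z}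

def IsGraphCovering (G H : Graph') (p : G.V → H.V) : Prop :=
  IsGraphHom G H p ∧ ∀ v : G.V, Set.BijOn p (nbhd G v) (nbhd H (p v))

def Is2CoveringMap (G H : Graph') (p : G.V → H.V) : Prop :=
  IsGraphHom G H p ∧ ∀ v : G.V,
    Set.BijOn p (nbhd G v) (nbhd H (p v)) ∧ Set.BijOn p (nbhd2 G v) (nbhd2 H (p v))

def pushforward {G H1 H2 : Graph'} (p : H1.V → H2.V) (hp : IsGraphHom H1 H2 p)
    (η : MultiHom G H1) : MultiHom G H2 where
  toFun x := p '' η.toFun x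
  nonempty x := (η.nonempty x).image p
  edge := by
    rintro x y hxy a ⟨a', ha', rfl⟩ b ⟨b', hb', rfl⟩
    exact hp (η.edge hxy a' ha' b' hb')

def IsCycleWalk {G : Graph'} {a : G.V} (γ : Walk G a a) : Prop :=
  3 ≤ γ.len ∧ ∀ i j, i < γ.len → j < γ.len → γ.toFun i = γ.toFun j → i = j

def IsTree (T : Graph') : Prop :=
  (∀ x, ¬ T.E x x) ∧ (∀ a b : T.V, Nonempty (Walk T a b)) ∧
    ∀ (a : T.V) (γ : Walk T a a), ¬ IsCycleWalk γ

def IsPath {G : Graph'} {a b : G.V} (γ : Walk G a b) : Prop :=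
  ∀ i j, i ≤ γ.len → j ≤ γ.len → γ.toFun i = γ.toFun j → i = j

def OnWalk {G : Graph'} {a b : G.V} (γ : Walk G a b) (y : G.V) : Prop :=
  ∃ i ≤ γ.len, γ.toFun i = y

def CrossHomotopic (G H : Graph') (f g : G.V → H.V) : Prop :=
  ∃ (n : ℕ) (h : (prodI G n).V → H.V), IsGraphHom (prodI G n) H h ∧
    (∀ x, h (x, finClip n 0) = f x) ∧ (∀ x, h (x, finClip n n) = g x)

def quotGraph (G : Graph') (Γ : Type) [Group Γ] [MulAction Γ G.V] : Graph' where
  V := Quotient (MulAction.orbitRel Γ G.V)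
  E := fun α β => ∃ x y : G.V, Quotient.mk (MulAction.orbitRel Γ G.V) x = α ∧
        Quotient.mk (MulAction.orbitRel Γ G.V) y = β ∧ G.E x y
  symm := by
    rintro α β ⟨x, y, hx, hy, hxy⟩
    exact ⟨y, x, hy, hx, G.symm hxy⟩
/- ======================= auxiliary infrastructure ======================= -/

section TreeInfra

def Walk.copy {G : Graph'} {a b a' b' : G.V} (γ : Walk G a b) (ha : a = a') (hb : b = b') :
    Walk G a' b' := ⟨γ.len, γ.toFun, ha ▸ γ.start_eq, hb ▸ γ.end_eq, γ.adj⟩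

@[simp] lemma Walk.copy_len {G : Graph'} {a b a' b' : G.V} (γ : Walk G a b)
    (ha : a = a') (hb : b = b') : (γ.copy ha hb).len = γ.len := rfl

@[simp] lemma Walk.copy_toFun {G : Graph'} {a b a' b' : G.V} (γ : Walk G a b)
    (ha : a = a') (hb : b = b') : (γ.copy ha hb).toFun = γ.toFun := rfl

@[simp] lemma Walk.concat_len {G : Graph'} {a b c : G.V} (γ : Walk G a b) (δ : Walk G b c) :
    (γ.concat δ).len = γ.len + δ.len := rfl

@[simp] lemma Walk.reverse_len {G : Graph'} {a b : G.V} (γ : Walk G a b) :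
    γ.reverse.len = γ.len := rfl

def Walk.segment {G : Graph'} {a b : G.V} (γ : Walk G a b) (i j : ℕ) (hij : i ≤ j)
    (hj : j ≤ γ.len) : Walk G (γ.toFun i) (γ.toFun j) where
  len := j - i
  toFun k := γ.toFun (i + min k (j - i))
  start_eq := by simp
  end_eq := by (try dsimp only); rw [min_self]; congr 1; omega
  adj := by
    intro k hk
    (try dsimp only)
    rw [min_eq_left (by omega), min_eq_left (by omega)]
    have e : i + (k + 1) = (i + k) + 1 := by omega
    rw [e]
    exact γ.adj (i + k) (by omega)

@[simp] lemma Walk.segment_len {G : Graph'} {a b : G.V} (γ : Walk G a b) (i j : ℕ)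
    (hij : i ≤ j) (hj : j ≤ γ.len) : (γ.segment i j hij hj).len = j - i := rfl

def Walk.splice {G : Graph'} {a b : G.V} (γ : Walk G a b) (i j : ℕ) (hij : i < j)
    (hj : j ≤ γ.len) (heq : γ.toFun i = γ.toFun j) : Walk G a b where
  len := γ.len - (j - i)
  toFun k := if k ≤ i then γ.toFun k else γ.toFun (k + (j - i))
  start_eq := by (try dsimp only); rw [if_pos (Nat.zero_le i)]; exact γ.start_eq
  end_eq := by
    (try dsimp only)
    by_cases h : γ.len - (j - i) ≤ i
    · rw [if_pos h]
      have h1 : γ.len - (j - i) = i := by omega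
      have h2 : γ.len = j := by omega
      rw [h1, heq, ← h2]
      exact γ.end_eq
    · rw [if_neg h]
      have h1 : γ.len - (j - i) + (j - i) = γ.len := by omega
      rw [h1]
      exact γ.end_eq
  adj := by
    intro k hk
    (try dsimp only at hk ⊢)
    rcases Nat.lt_or_ge k i with h | h
    · rw [if_pos (by omega), if_pos (by omega)]
      exact γ.adj k (by omega)
    · rcases Nat.eq_or_lt_of_le h with h' | h'
      · rw [if_pos (by omega : k ≤ i), if_neg (by omega : ¬ k + 1 ≤ i)]
        have hk' : k = i := h'.symm
        subst hk'
        rw [heq]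
        have e : k + 1 + (j - k) = j + 1 := by omega
        rw [e]
        exact γ.adj j (by omega)
      · rw [if_neg (by omega), if_neg (by omega)]
        have e : k + 1 + (j - i) = (k + (j - i)) + 1 := by omega
        rw [e]
        exact γ.adj (k + (j - i)) (by omega)

@[simp] lemma Walk.splice_len {G : Graph'} {a b : G.V} (γ : Walk G a b) (i j : ℕ) (hij : i < j)
    (hj : j ≤ γ.len) (heq : γ.toFun i = γ.toFun j) :
    (γ.splice i j hij hj heq).len = γ.len - (j - i) := rfl

def edgeWalk {G : Graph'} {a b : G.V} (h : G.E a b) : Walk G a b where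
  len := 1
  toFun i := if i = 0 then a else b
  start_eq := by simp
  end_eq := by simp
  adj := by
    intro i hi
    have h0 : i = 0 := by omega
    subst h0
    simpa using h

@[simp] lemma edgeWalk_len {G : Graph'} {a b : G.V} (h : G.E a b) : (edgeWalk h).len = 1 := rfl

lemma dist_le {T : Graph'} {a b : T.V} (γ : Walk T a b) : T.dist a b ≤ γ.len :=
  Nat.sInf_le ⟨γ, rfl⟩

lemma exists_geodesic {T : Graph'} (hConn : ∀ a b : T.V, Nonempty (Walk T a b)) (a b : T.V) :
    ∃ γ : Walk T a b, γ.len = T.dist a b := by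
  have hne : {n | ∃ γ : Walk T a b, γ.len = n}.Nonempty := ⟨(hConn a b).some.len, (hConn a b).some, rfl⟩
  exact Nat.sInf_mem hne

lemma tdist_self {T : Graph'} (a : T.V) : T.dist a a = 0 :=
  Nat.le_zero.mp (dist_le (constWalk a))

lemma tdist_triangle {T : Graph'} (hConn : ∀ a b : T.V, Nonempty (Walk T a b)) (a b c : T.V) :
    T.dist a c ≤ T.dist a b + T.dist b c := by
  obtain ⟨γ, hγ⟩ := exists_geodesic hConn a b
  obtain ⟨δ, hδ⟩ := exists_geodesic hConn b c
  have h := dist_le (γ.concat δ)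
  simpa [hγ, hδ] using h

lemma tdist_comm {T : Graph'} (hConn : ∀ a b : T.V, Nonempty (Walk T a b)) (a b : T.V) :
    T.dist a b = T.dist b a := by
  apply le_antisymm
  · obtain ⟨γ, hγ⟩ := exists_geodesic hConn b a
    have h := dist_le γ.reverse
    simpa [hγ] using h
  · obtain ⟨γ, hγ⟩ := exists_geodesic hConn a b
    have h := dist_le γ.reverse
    simpa [hγ] using h

lemma dist_start_le {T : Graph'} {a b : T.V} (γ : Walk T a b) {i : ℕ} (hi : i ≤ γ.len) :
    T.dist a (γ.toFun i) ≤ i := by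
  have h := dist_le ((γ.segment 0 i (Nat.zero_le i) hi).copy γ.start_eq rfl)
  simpa using h

lemma dist_along {T : Graph'} (hConn : ∀ a b : T.V, Nonempty (Walk T a b)) {a b : T.V}
    (γ : Walk T a b) (hγ : γ.len = T.dist a b) {i : ℕ} (hi : i ≤ γ.len) :
    T.dist a (γ.toFun i) = i ∧ T.dist (γ.toFun i) b = γ.len - i := by
  have h1 : T.dist a (γ.toFun i) ≤ i := dist_start_le γ hi
  have h2 : T.dist (γ.toFun i) b ≤ γ.len - i := by
    have h := dist_le ((γ.segment i γ.len hi le_rfl).copy rfl γ.end_eq)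
    simpa using h
  have h3 := tdist_triangle hConn a (γ.toFun i) b
  omega

lemma exists_path_le {G : Graph'} : ∀ (L : ℕ) {a b : G.V} (γ : Walk G a b), γ.len ≤ L →
    ∃ δ : Walk G a b, IsPath δ ∧ δ.len ≤ γ.len := by
  intro L
  induction L with
  | zero =>
    intro a b γ hγ
    exact ⟨γ, fun i j hi hj _ => by omega, le_rfl⟩
  | succ L ih =>
    intro a b γ hγ
    by_cases hp : ∀ i j, i ≤ γ.len → j ≤ γ.len → γ.toFun i = γ.toFun j → i = j
    · exact ⟨γ, hp, le_rfl⟩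
    · push_neg at hp
      obtain ⟨i, j, hi, hj, heq, hne⟩ := hp
      obtain ⟨i, j, hij, hjle, heq⟩ : ∃ i j, i < j ∧ j ≤ γ.len ∧ γ.toFun i = γ.toFun j := by
        rcases hne.lt_or_gt with h' | h'
        exacts [⟨i, j, h', hj, heq⟩, ⟨j, i, h', hi, heq.symm⟩]
      obtain ⟨δ, hδp, hδl⟩ := ih (γ.splice i j hij hjle heq) (by simp; omega)
      exact ⟨δ, hδp, hδl.trans (by simp)⟩

lemma exists_geodesic_path {T : Graph'} (hConn : ∀ a b : T.V, Nonempty (Walk T a b)) (a b : T.V) :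
    ∃ γ : Walk T a b, IsPath γ ∧ γ.len = T.dist a b := by
  obtain ⟨γ, hγ⟩ := exists_geodesic hConn a b
  obtain ⟨δ, hδp, hδl⟩ := exists_path_le γ.len γ le_rfl
  exact ⟨δ, hδp, le_antisymm (hγ ▸ hδl) (dist_le δ)⟩

lemma no_odd_closed {T : Graph'} (hT : IsTree T) :
    ∀ (L : ℕ) {c : T.V} (γ : Walk T c c), γ.len ≤ L → γ.len % 2 = 1 → False := by
  intro L
  induction L with
  | zero => intro c γ h1 h2; omega
  | succ L ih =>
    intro c γ hL hodd
    rcases Nat.lt_or_ge γ.len (L + 1) with h | h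
    · exact ih γ (by omega) hodd
    · have hlen : γ.len = L + 1 := by omega
      by_cases h1 : γ.len = 1
      · have hadj := γ.adj 0 (by omega)
        have e0 := γ.start_eq
        have e1 : γ.toFun (0 + 1) = c := by
          have : γ.toFun γ.len = c := γ.end_eq
          rw [h1] at this
          exact this
        rw [e0, e1] at hadj
        exact hT.1 c hadj
      · by_cases h2 : ∀ i j, i < γ.len → j < γ.len → γ.toFun i = γ.toFun j → i = j
        · exact hT.2.2 c γ ⟨by omega, h2⟩
        · push_neg at h2
          obtain ⟨i, j, hi, hj, heq, hne⟩ := h2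
          obtain ⟨i, j, hij, hjlt, heq⟩ : ∃ i j, i < j ∧ j < γ.len ∧ γ.toFun i = γ.toFun j := by
            rcases hne.lt_or_gt with h' | h'
            exacts [⟨i, j, h', hj, heq⟩, ⟨j, i, h', hi, heq.symm⟩]
          by_cases hodd1 : (j - i) % 2 = 1
          · exact ih ((γ.segment i j hij.le (by omega)).copy rfl heq.symm)
              (by simp; omega) (by simp; omega)
          · exact ih (((γ.segment 0 i (Nat.zero_le i) (by omega)).copy γ.start_eq rfl).concat
              ((γ.segment j γ.len (by omega) le_rfl).copy heq.symm γ.end_eq))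
              (by simp; omega) (by simp; omega)

lemma walk_parity {T : Graph'} (hT : IsTree T) {a b : T.V} (γ δ : Walk T a b) :
    γ.len % 2 = δ.len % 2 := by
  by_contra h
  exact no_odd_closed hT (γ.concat δ.reverse).len (γ.concat δ.reverse) le_rfl (by simp; omega)

lemma dist_adj {T : Graph'} (hT : IsTree T) (a : T.V) {u v : T.V} (huv : T.E u v) :
    T.dist a v = T.dist a u + 1 ∨ T.dist a u = T.dist a v + 1 := by
  have hConn := hT.2.1
  obtain ⟨γ, hγ⟩ := exists_geodesic hConn a u
  obtain ⟨δ, hδ⟩ := exists_geodesic hConn a v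
  have h1 : T.dist a v ≤ T.dist a u + 1 := by
    have h := dist_le (γ.concat (edgeWalk huv))
    simpa [hγ] using h
  have h2 : T.dist a u ≤ T.dist a v + 1 := by
    have h := dist_le (δ.concat (edgeWalk (T.symm huv)))
    simpa [hδ] using h
  have h3 : (γ.concat (edgeWalk huv)).len % 2 = δ.len % 2 := walk_parity hT _ δ
  have h4 : (γ.len + 1) % 2 = δ.len % 2 := by simpa using h3
  rw [hγ, hδ] at h4
  omega

lemma cycle_from_two {T : Graph'} (hT : IsTree T) {c : T.V} (L : ℕ) (F : ℕ → T.V)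
    (hF0 : F 0 = c) (hFL : F L = c) (hadj : ∀ t, t < L → T.E (F t) (F (t + 1)))
    (h3 : 3 ≤ L) (hinj : ∀ i j, i < L → j < L → F i = F j → i = j) : False :=
  hT.2.2 c ⟨L, F, hF0, hFL, hadj⟩ ⟨h3, hinj⟩

lemma unique_parent {T : Graph'} (hT : IsTree T) {a v z w : T.V} {k : ℕ}
    (hz : T.E v z) (hw : T.E v w)
    (hdz : T.dist a z = k) (hdw : T.dist a w = k) (hdv : T.dist a v = k + 1) :
    z = w := by
  classical
  by_contra hzw
  have hConn := hT.2.1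
  obtain ⟨α, hα⟩ := exists_geodesic hConn a z
  obtain ⟨β, hβ⟩ := exists_geodesic hConn a w
  have hαlen : α.len = k := by rw [hα, hdz]
  have hβlen : β.len = k := by rw [hβ, hdw]
  have hαd : ∀ i, i ≤ k → T.dist a (α.toFun i) = i := by
    intro i hi
    exact (dist_along hConn α hα (by omega)).1
  have hβd : ∀ i, i ≤ k → T.dist a (β.toFun i) = i := by
    intro i hi
    exact (dist_along hConn β hβ (by omega)).1
  have hαk : α.toFun k = z := by rw [← hαlen]; exact α.end_eq
  have hβk : β.toFun k = w := by rw [← hβlen]; exact β.end_eq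
  obtain ⟨m, hmk, hPm, hmax⟩ : ∃ m, m ≤ k ∧ α.toFun m = β.toFun m ∧
      ∀ i, m < i → i ≤ k → α.toFun i ≠ β.toFun i := by
    have h0 : (fun i => α.toFun i = β.toFun i) 0 := by
      show α.toFun 0 = β.toFun 0
      rw [α.start_eq, β.start_eq]
    exact ⟨Nat.findGreatest (fun i => α.toFun i = β.toFun i) k,
      Nat.findGreatest_le k,
      Nat.findGreatest_spec (P := fun i => α.toFun i = β.toFun i) (Nat.zero_le k) h0,
      fun i h1 h2 => Nat.findGreatest_is_greatest (P := fun i => α.toFun i = β.toFun i) h1 h2⟩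
  have hmlt : m < k := by
    rcases Nat.lt_or_ge m k with h | h
    · exact h
    · have hmk' : m = k := by omega
      rw [hmk', hαk, hβk] at hPm
      exact absurd hPm hzw
  set L := 2 * (k - m) + 2 with hLdef
  set F : ℕ → T.V := fun t => if t ≤ k - m then α.toFun (m + t)
    else if t = k - m + 1 then v else β.toFun (m + (L - t)) with hFdef
  have hFval1 : ∀ t, t ≤ k - m → F t = α.toFun (m + t) := by
    intro t ht
    simp only [hFdef]
    rw [if_pos ht]
  have hFval2 : F (k - m + 1) = v := by
    simp only [hFdef]
    rw [if_neg (by omega)]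
    simp
  have hFval3 : ∀ t, k - m + 1 < t → F t = β.toFun (m + (L - t)) := by
    intro t ht
    simp only [hFdef]
    rw [if_neg (by omega), if_neg (by omega)]
  have hstart : F 0 = α.toFun m := by
    rw [hFval1 0 (Nat.zero_le _)]
    norm_num
  have hend : F L = α.toFun m := by
    rw [hFval3 L (by omega)]
    have e : L - L = 0 := by omega
    rw [e]
    exact hPm.symm
  have hadjF : ∀ t, t < L → T.E (F t) (F (t + 1)) := by
    intro t ht
    by_cases c1 : t + 1 ≤ k - m
    · rw [hFval1 t (by omega), hFval1 (t + 1) c1]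
      have e : m + (t + 1) = (m + t) + 1 := by omega
      rw [e]
      exact α.adj (m + t) (by omega)
    · by_cases c2 : t = k - m
      · have e2 : t + 1 = k - m + 1 := by omega
        rw [hFval1 t (by omega), e2, hFval2]
        have e3 : m + t = k := by omega
        rw [e3, hαk]
        exact T.symm hz
      · by_cases c3 : t = k - m + 1
        · subst c3
          rw [hFval2, hFval3 (k - m + 1 + 1) (by omega)]
          have e4 : m + (L - (k - m + 1 + 1)) = k := by omega
          rw [e4, hβk]
          exact hw
        · rw [hFval3 t (by omega), hFval3 (t + 1) (by omega)]
          have e5 : m + (L - t) = (m + (L - (t + 1))) + 1 := by omega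
          rw [e5]
          exact T.symm (β.adj (m + (L - (t + 1))) (by omega))
  have hdist : ∀ t, t < L → T.dist a (F t) =
      (if t ≤ k - m then m + t else if t = k - m + 1 then k + 1 else m + (L - t)) := by
    intro t ht
    by_cases c1 : t ≤ k - m
    · rw [if_pos c1, hFval1 t c1]
      exact hαd (m + t) (by omega)
    · rw [if_neg c1]
      by_cases c2 : t = k - m + 1
      · rw [if_pos c2, c2, hFval2]
        exact hdv
      · rw [if_neg c2, hFval3 t (by omega)]
        exact hβd (m + (L - t)) (by omega)
  have key : ∀ t1 t2, t1 < t2 → t2 < L → F t1 = F t2 → False := by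
    intro t1 t2 h12 h2L heq
    have e1 := hdist t1 (by omega)
    have e2 := hdist t2 h2L
    rw [heq] at e1
    split_ifs at e1 e2 with c1 c2 c3 c4 c5 c6 c7 c8 c9
    all_goals try omega
    -- remaining real case : t1 ≤ k - m, t2 in the β branch
    · have ht1 : t1 = L - t2 := by omega
      rw [hFval1 t1 c1, hFval3 t2 (by omega)] at heq
      have e : m + (L - t2) = m + t1 := by omega
      rw [e] at heq
      exact hmax (m + t1) (by omega) (by omega) heq
  refine cycle_from_two hT L F hstart hend hadjF (by omega) ?_
  intro i j hi hj hFeq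
  rcases lt_trichotomy i j with h | h | h
  · exact absurd hFeq (fun hh => key i j h hj hh)
  · exact h
  · exact absurd hFeq.symm (fun hh => key j i h hi hh)

lemma path_dist {T : Graph'} (hT : IsTree T) {a b : T.V} (γ : Walk T a b) (hγ : IsPath γ) :
    ∀ i, i ≤ γ.len → T.dist a (γ.toFun i) = i := by
  have key : ∀ j, (j ≤ γ.len → T.dist a (γ.toFun j) = j) ∧
      (j + 1 ≤ γ.len → T.dist a (γ.toFun (j + 1)) = j + 1) := by
    intro j
    induction j with
    | zero =>
      constructor
      · intro _
        rw [γ.start_eq]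
        exact tdist_self a
      · intro h1
        rcases dist_adj hT a (γ.adj 0 (by omega)) with h | h
        · rw [γ.start_eq, tdist_self] at h
          exact h
        · rw [γ.start_eq, tdist_self] at h
          omega
    | succ j ihj =>
      constructor
      · intro h
        exact ihj.2 h
      · intro h2
        have hd1 : T.dist a (γ.toFun (j + 1)) = j + 1 := ihj.2 (by omega)
        have hd0 : T.dist a (γ.toFun j) = j := ihj.1 (by omega)
        rcases dist_adj hT a (γ.adj (j + 1) (by omega)) with h | h
        · omega
        · exfalso
          have hbad : T.dist a (γ.toFun (j + 1 + 1)) = j := by omega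
          have e1 : T.E (γ.toFun (j + 1)) (γ.toFun j) := T.symm (γ.adj j (by omega))
          have e2 : T.E (γ.toFun (j + 1)) (γ.toFun (j + 1 + 1)) := γ.adj (j + 1) (by omega)
          have heq := unique_parent hT e1 e2 hd0 hbad hd1
          have := hγ j (j + 1 + 1) (by omega) (by omega) heq
          omega
  intro i hi
  exact (key i).1 hi

lemma step_far {T : Graph'} (hT : IsTree T) {n : ℕ} (hn : 1 ≤ n) {p p' y y' : T.V}
    (hpp' : T.E p p') (hyy' : T.E y y')
    (h1 : T.dist p y = 2 * n) (h2 : T.dist p' y = 2 * n + 1)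
    (h3 : T.dist p' y' = 2 * n) (h4 : T.dist p y' = 2 * n + 1) : False := by
  have hConn := hT.2.1
  obtain ⟨g, hg⟩ := exists_geodesic hConn p' y'
  have hglen : g.len = 2 * n := by rw [hg, h3]
  set P1 := (edgeWalk hpp').concat g with hP1
  have hP1len : P1.len = 2 * n + 1 := by simp [hP1, hglen]; omega
  have hP1geo : P1.len = T.dist p y' := by rw [hP1len, h4]
  have hw : T.dist p (P1.toFun (2 * n)) = 2 * n := (dist_along hConn P1 hP1geo (by omega)).1
  have hwadj : T.E (P1.toFun (2 * n)) y' := by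
    have h := P1.adj (2 * n) (by omega)
    have e : 2 * n + 1 = P1.len := hP1len.symm
    rw [e, P1.end_eq] at h
    exact h
  have hy : y = P1.toFun (2 * n) := unique_parent hT (T.symm hyy') (T.symm hwadj) h1 hw h4
  have hP11 : P1.toFun 1 = p' := by
    simp only [hP1, Walk.concat, edgeWalk]
    norm_num
  have hseg := dist_le ((P1.segment 1 (2 * n) (by omega) (by omega)).copy hP11 rfl)
  simp only [Walk.copy_len, Walk.segment_len] at hseg
  rw [← hy] at hseg
  omega

lemma step_near {T : Graph'} (hT : IsTree T) {n : ℕ} (hn : 1 ≤ n) {p p' y y' : T.V}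
    (hpp' : T.E p p') (hyy' : T.E y y')
    (h1 : T.dist p y = 2 * n) (h2 : T.dist p' y = 2 * n - 1)
    (h3 : T.dist p' y' = 2 * n) (h4 : T.dist p y' = 2 * n - 1) : False := by
  have hConn := hT.2.1
  obtain ⟨g, hg⟩ := exists_geodesic hConn p y'
  have hglen : g.len = 2 * n - 1 := by rw [hg, h4]
  set P := (edgeWalk (T.symm hpp')).concat g with hP
  have hPlen : P.len = 2 * n := by simp [hP, hglen]; omega
  have hPgeo : P.len = T.dist p' y' := by rw [hPlen, h3]
  have hw : T.dist p' (P.toFun (2 * n - 1)) = 2 * n - 1 := (dist_along hConn P hPgeo (by omega)).1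
  have hwadj : T.E (P.toFun (2 * n - 1)) y' := by
    have h := P.adj (2 * n - 1) (by omega)
    have e : 2 * n - 1 + 1 = P.len := by omega
    rw [e, P.end_eq] at h
    exact h
  have hdv : T.dist p' y' = 2 * n - 1 + 1 := by omega
  have hy : y = P.toFun (2 * n - 1) := unique_parent hT (T.symm hyy') (T.symm hwadj) h2 hw hdv
  have hP1 : P.toFun 1 = p := by
    simp only [hP, Walk.concat, edgeWalk]
    norm_num
  have hseg := dist_le ((P.segment 1 (2 * n - 1) (by omega) (by omega)).copy hP1 rfl)
  simp only [Walk.copy_len, Walk.segment_len] at hseg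
  rw [← hy] at hseg
  omega

lemma main_aux {T : Graph'} (hT : IsTree T) {n : ℕ} (hn : 1 ≤ n)
    (p p' : T.V) (A B : Set T.V) (hB : B.Nonempty)
    (hpp' : T.E p p')
    (hedge : ∀ a ∈ A, ∀ b ∈ B, T.E a b)
    (hbB : ∀ b ∈ B, T.dist p' b ≤ 2 * n)
    (hFarA : ∃ a ∈ A, T.dist p a = 2 * n ∧ T.dist p' a = 2 * n + 1)
    (hNFarB : ¬ ∃ b ∈ B, T.dist p' b = 2 * n ∧ T.dist p b = 2 * n + 1) :
    (∃ b₀ : T.V, B = {b₀} ∧ ∀ a ∈ A, T.dist p a = 2 * n →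
        ∀ P : Walk T p a, IsPath P → OnWalk P b₀) ∧
    ¬ (∃ a₀ : T.V, A = {a₀} ∧ ∀ b ∈ B, T.dist p' b = 2 * n →
        ∀ P : Walk T p' b, IsPath P → OnWalk P a₀) := by
  have hConn := hT.2.1
  obtain ⟨y, hyA, hdpy, hdp'y⟩ := hFarA
  have hballs : ∀ b ∈ B, T.dist p' b = 2 * n := by
    intro b hb
    have hb' := hbB b hb
    rcases dist_adj hT p' (hedge y hyA b hb) with h | h <;> omega
  have hsing : ∀ b₁ ∈ B, ∀ b₂ ∈ B, b₁ = b₂ := by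
    intro b₁ h₁ b₂ h₂
    exact unique_parent hT (hedge y hyA b₁ h₁) (hedge y hyA b₂ h₂)
      (hballs b₁ h₁) (hballs b₂ h₂) hdp'y
  obtain ⟨b₀, hb₀⟩ := hB
  have hBset : B = {b₀} := Set.eq_singleton_iff_unique_mem.mpr
    ⟨hb₀, fun b hb => hsing b hb b₀ hb₀⟩
  have hdb₀ : T.dist p' b₀ = 2 * n := hballs b₀ hb₀
  have hdpb₀ : T.dist p b₀ = 2 * n - 1 := by
    have h := dist_adj hT b₀ hpp'
    rw [tdist_comm hConn b₀ p, tdist_comm hConn b₀ p'] at h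
    rcases h with h | h
    · omega
    · exact absurd ⟨b₀, hb₀, hdb₀, by omega⟩ hNFarB
  constructor
  · refine ⟨b₀, hBset, ?_⟩
    intro a ha hda P hP
    have hlen : P.len = 2 * n := by
      have h := path_dist hT P hP P.len le_rfl
      rw [P.end_eq] at h
      omega
    have h1 : T.dist p (P.toFun (2 * n - 1)) = 2 * n - 1 := path_dist hT P hP (2 * n - 1) (by omega)
    have hadj : T.E (P.toFun (2 * n - 1)) a := by
      have h := P.adj (2 * n - 1) (by omega)
      have e : 2 * n - 1 + 1 = P.len := by omega
      rw [e, P.end_eq] at h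
      exact h
    have hdv : T.dist p a = 2 * n - 1 + 1 := by omega
    have hfin : P.toFun (2 * n - 1) = b₀ :=
      unique_parent hT (T.symm hadj) (hedge a ha b₀ hb₀) h1 hdpb₀ hdv
    exact ⟨2 * n - 1, by omega, hfin⟩
  · rintro ⟨a₀, hAset, hpaths⟩
    have hya : y = a₀ := by
      rw [hAset] at hyA
      exact hyA
    obtain ⟨P, hPp, hPl⟩ := exists_geodesic_path hConn p' b₀
    obtain ⟨idx, hidx, hidxeq⟩ := hpaths b₀ hb₀ hdb₀ P hPp
    have hle := dist_start_le P hidx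
    rw [hidxeq, ← hya] at hle
    rw [hdb₀] at hPl
    omega

end TreeInfra

theorem statement_5 (G T : Graph') (hT : IsTree T)
    (f : G.V → T.V) (hf : IsGraphHom G T f) (n : ℕ) (hn : 1 ≤ n)
    (η : MultiHom G T)
    (hbound : ∀ z : G.V, ∀ y ∈ η.toFun z, T.dist (f z) y ≤ 2 * n)
    (x x' : G.V) (hxx' : G.E x x')
    (hux : ∃ y ∈ η.toFun x, T.dist (f x) y = 2 * n)
    (hux' : ∃ y ∈ η.toFun x', T.dist (f x') y = 2 * n) :
    let C1 : Prop := ∃ y : T.V, η.toFun x = {y} ∧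
      ∀ y' ∈ η.toFun x', T.dist (f x') y' = 2 * n →
        ∀ P : Walk T (f x') y', IsPath P → OnWalk P y
    let C2 : Prop := ∃ y' : T.V, η.toFun x' = {y'} ∧
      ∀ y ∈ η.toFun x, T.dist (f x) y = 2 * n →
        ∀ P : Walk T (f x) y, IsPath P → OnWalk P y'
    (C1 ∨ C2) ∧ ¬ (C1 ∧ C2) := by
  intro C1 C2
  have hConn := hT.2.1
  have hpp' : T.E (f x) (f x') := hf hxx'
  obtain ⟨y₀, hy₀, hdy₀⟩ := hux
  obtain ⟨y₀', hy₀', hdy₀'⟩ := hux'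
  have hedge : ∀ a ∈ η.toFun x, ∀ b ∈ η.toFun x', T.E a b :=
    fun a ha b hb => η.edge hxx' a ha b hb
  have hcase : T.dist (f x') y₀ = 2 * n + 1 ∨ T.dist (f x') y₀ = 2 * n - 1 := by
    have h := dist_adj hT y₀ hpp'
    rw [tdist_comm hConn y₀ (f x), tdist_comm hConn y₀ (f x')] at h
    omega
  rcases hcase with hfar | hnear
  · -- FarX : conclusion C2 holds and C1 fails
    have hNFarB : ¬ ∃ b ∈ η.toFun x', T.dist (f x') b = 2 * n ∧ T.dist (f x) b = 2 * n + 1 := by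
      rintro ⟨b, hb, hb1, hb2⟩
      exact step_far hT hn hpp' (hedge y₀ hy₀ b hb) hdy₀ hfar hb1 hb2
    obtain ⟨hC2, hnC1⟩ := main_aux hT hn (f x) (f x') (η.toFun x) (η.toFun x')
      (η.nonempty x') hpp' hedge (hbound x') ⟨y₀, hy₀, hdy₀, hfar⟩ hNFarB
    exact ⟨Or.inr hC2, fun hcc => hnC1 hcc.1⟩
  · have hcase' : T.dist (f x) y₀' = 2 * n + 1 ∨ T.dist (f x) y₀' = 2 * n - 1 := by
      have h := dist_adj hT y₀' (T.symm hpp')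
      rw [tdist_comm hConn y₀' (f x), tdist_comm hConn y₀' (f x')] at h
      omega
    rcases hcase' with hfar' | hnear'
    · -- FarX' : conclusion C1 holds and C2 fails
      have hedge' : ∀ b ∈ η.toFun x', ∀ a ∈ η.toFun x, T.E b a :=
        fun b hb a ha => T.symm (hedge a ha b hb)
      have hNFarB' : ¬ ∃ a ∈ η.toFun x, T.dist (f x) a = 2 * n ∧ T.dist (f x') a = 2 * n + 1 := by
        rintro ⟨a, ha, ha1, ha2⟩
        exact step_far hT hn (T.symm hpp') (hedge' y₀' hy₀' a ha) hdy₀' hfar' ha1 ha2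
      obtain ⟨hC1, hnC2⟩ := main_aux hT hn (f x') (f x) (η.toFun x') (η.toFun x)
        (η.nonempty x) (T.symm hpp') hedge' (hbound x) ⟨y₀', hy₀', hdy₀', hfar'⟩ hNFarB'
      exact ⟨Or.inl hC1, fun hcc => hnC2 hcc.2⟩
    · exact absurd (step_near hT hn hpp' (hedge y₀ hy₀ y₀' hy₀') hdy₀ hnear hdy₀' hnear') id
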